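/- arXiv:2512.03367 — 3 statements merged into one kernel-verified Lean document; each statement's English description precedes it below -/
import Mathlib

section
/- For 0 ≤ r ≤ min(m,n), the number of rank r linear maps from F_q^m to F_q^n equals [m choose r]_q · [n choose r]_q · ∏_{i=0}^{r-1}(q^r − q^i), where [m choose r]_q denotes the Gaussian binomial coefficient. -/
open LinearMap Module

section helpers
variable {F : Type*} [Field F] [Fintype F]
variable {V W : Type*} [AddCommGroup V] [Module F V] [AddCommGroup W] [Module F W]
variable [FiniteDimensional F V] [FiniteDimensional F W]

local notation "q" => Fintype.card F

/-- Count of injective linear maps. -/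
theorem card_inj (h : finrank F V ≤ finrank F W) :
    Nat.card {f : V →ₗ[F] W // Function.Injective f} =
      ∏ i ∈ Finset.range (finrank F V), (q ^ finrank F W - q ^ i) := by
  classical
  have : Finite W := Module.finite_of_finite F
  set k := finrank F V with hk
  let b : Basis (Fin k) F V := finBasis F V
  have e : {f : V →ₗ[F] W // Function.Injective f} ≃
      {s : Fin k → W // LinearIndependent F s} :=
  { toFun := fun f => ⟨f.1 ∘ b, b.linearIndependent.map' f.1 (ker_eq_bot.mpr f.2)⟩
    invFun := fun s => ⟨b.constr F s.1, by
      intro x y hxy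
      have h2 : ∀ z, b.constr F s.1 z = ∑ i, b.equivFun z i • s.1 i := fun z =>
        b.constr_apply_fintype F s.1 z
      have h3 : ∑ i, (b.equivFun x i - b.equivFun y i) • s.1 i = 0 := by
        simp only [sub_smul, Finset.sum_sub_distrib, ← h2, hxy, sub_self]
      have h4 := (Fintype.linearIndependent_iff.mp s.2) _ h3
      have h5 : b.equivFun x = b.equivFun y := by
        ext i; exact sub_eq_zero.mp (h4 i)
      exact b.equivFun.injective h5⟩
    left_inv := fun f => by
      apply Subtype.ext
      apply b.ext
      intro i
      simp
    right_inv := fun s => by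
      ext i
      simp }
  rw [Nat.card_congr e, card_linearIndependent (by simpa using h)]
  rw [Finset.prod_range fun i => (q ^ finrank F W - q ^ i)]
end helpers

section surj
variable {F : Type*} [Field F] [Fintype F]
variable {V W : Type*} [AddCommGroup V] [Module F V] [AddCommGroup W] [Module F W]
variable [FiniteDimensional F V] [FiniteDimensional F W]

local notation "q" => Fintype.card F

theorem card_surj (h : finrank F W ≤ finrank F V) :
    Nat.card {f : V →ₗ[F] W // Function.Surjective f} =
      ∏ i ∈ Finset.range (finrank F W), (q ^ finrank F V - q ^ i) := by
  classical
  have e : {f : V →ₗ[F] W // Function.Surjective f} ≃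
      {g : Dual F W →ₗ[F] Dual F V // Function.Injective g} :=
  { toFun := fun f => ⟨f.1.dualMap, LinearMap.dualMap_injective_iff.mpr f.2⟩
    invFun := fun g => ⟨(evalEquiv F W).symm.toLinearMap ∘ₗ g.1.dualMap ∘ₗ
        (evalEquiv F V).toLinearMap, by
      have h1 : Function.Surjective g.1.dualMap :=
        LinearMap.dualMap_surjective_iff.mpr g.2
      exact ((evalEquiv F W).symm.surjective.comp h1).comp (evalEquiv F V).surjective⟩
    left_inv := fun f => by
      apply Subtype.ext
      ext v
      apply (evalEquiv F W).injective
      simp only [LinearMap.coe_comp, LinearEquiv.coe_coe, Function.comp_apply,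
        LinearEquiv.apply_symm_apply]
      ext φ
      simp
    right_inv := fun g => by
      apply Subtype.ext
      ext φ v
      simp }
  rw [Nat.card_congr e, card_inj (by rwa [Subspace.dual_finrank_eq, Subspace.dual_finrank_eq]),
    Subspace.dual_finrank_eq, Subspace.dual_finrank_eq]

end surj

section fiber
variable {F : Type*} [Field F] [Fintype F]
variable {V V' : Type*} [AddCommGroup V] [Module F V] [AddCommGroup V'] [Module F V']
variable [FiniteDimensional F V] [FiniteDimensional F V']

local notation "q" => Fintype.card F

theorem card_rank_r (r : ℕ) (hr : r ≤ finrank F V) :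
    Nat.card {f : V →ₗ[F] V' // finrank F (LinearMap.range f) = r} =
      Nat.card {W : Submodule F V' // finrank F W = r} *
        ∏ i ∈ Finset.range r, (q ^ finrank F V - q ^ i) := by
  classical
  have : Finite V := Module.finite_of_finite F
  have : Finite V' := Module.finite_of_finite F
  set S := {W : Submodule F V' // finrank F W = r} with hS
  have : Finite (V →ₗ[F] V') := Finite.of_injective _ DFunLike.coe_injective
  set A := {f : V →ₗ[F] V' // finrank F (LinearMap.range f) = r} with hA
  have : Finite A := Subtype.finite
  have : Finite S := Subtype.finite
  have := Fintype.ofFinite A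
  have := Fintype.ofFinite S
  let π : A → S := fun f => ⟨LinearMap.range f.1, f.2⟩
  have efib : ∀ W : S, {x : A // π x = W} ≃ {g : V →ₗ[F] W.1 // Function.Surjective g} := by
    intro W
    refine
    { toFun := fun x => ⟨LinearMap.codRestrict W.1 x.1.1
        (fun v => by
          have hrange : LinearMap.range x.1.1 = W.1 := congrArg Subtype.val x.2
          rw [← hrange]; exact LinearMap.mem_range_self _ v), ?_⟩
      invFun := fun g => ⟨⟨W.1.subtype ∘ₗ g.1, ?_⟩, ?_⟩
      left_inv := fun x => Subtype.ext (Subtype.ext (by ext v; rfl))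
      right_inv := fun g => Subtype.ext (by ext v; rfl) }
    · intro w
      have hrange : LinearMap.range x.1.1 = W.1 := congrArg Subtype.val x.2
      have hw : (w : V') ∈ LinearMap.range x.1.1 := by rw [hrange]; exact w.2
      obtain ⟨v, hv⟩ := hw
      exact ⟨v, Subtype.ext hv⟩
    · have hrange : LinearMap.range (W.1.subtype ∘ₗ g.1) = W.1 := by
        rw [LinearMap.range_comp, LinearMap.range_eq_top.mpr g.2, Submodule.map_top,
          Submodule.range_subtype]
      rw [hrange]; exact W.2
    · apply Subtype.ext
      show LinearMap.range (W.1.subtype ∘ₗ g.1) = W.1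
      rw [LinearMap.range_comp, LinearMap.range_eq_top.mpr g.2, Submodule.map_top,
        Submodule.range_subtype]
  have hcard : ∀ W : S, Nat.card {x : A // π x = W} =
      ∏ i ∈ Finset.range r, (q ^ finrank F V - q ^ i) := by
    intro W
    rw [Nat.card_congr (efib W), card_surj (by rw [W.2]; exact hr), W.2]
  calc Nat.card A = Nat.card (Σ W : S, {x : A // π x = W}) :=
        (Nat.card_congr (Equiv.sigmaFiberEquiv π)).symm
    _ = ∑ W : S, ∏ i ∈ Finset.range r, (q ^ finrank F V - q ^ i) := by
        rw [Nat.card_eq_fintype_card, Fintype.card_sigma]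
        exact Finset.sum_congr rfl (fun W _ => by
          rw [← Nat.card_eq_fintype_card]; exact hcard W)
    _ = Nat.card S * ∏ i ∈ Finset.range r, (q ^ finrank F V - q ^ i) := by
        rw [Finset.sum_const, Finset.card_univ, Nat.card_eq_fintype_card, smul_eq_mul]

end fiber

section subspaces
variable {F : Type*} [Field F] [Fintype F]
variable {V' : Type*} [AddCommGroup V'] [Module F V'] [FiniteDimensional F V']

local notation "q" => Fintype.card F

theorem card_subspaces_mul (r : ℕ) (hr : r ≤ finrank F V') :
    Nat.card {W : Submodule F V' // finrank F W = r} *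
        ∏ i ∈ Finset.range r, (q ^ r - q ^ i) =
      ∏ i ∈ Finset.range r, (q ^ finrank F V' - q ^ i) := by
  classical
  have : Finite V' := Module.finite_of_finite F
  have : Finite ((Fin r → F) →ₗ[F] V') := Finite.of_injective _ DFunLike.coe_injective
  have hfr : finrank F (Fin r → F) = r := by
    simp [Module.finrank_fintype_fun_eq_card]
  set S := {W : Submodule F V' // finrank F W = r} with hS
  set A := {f : (Fin r → F) →ₗ[F] V' // Function.Injective f} with hA
  have : Finite A := Subtype.finite
  have : Finite S := Subtype.finite
  have := Fintype.ofFinite A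
  have := Fintype.ofFinite S
  let π : A → S := fun f => ⟨LinearMap.range f.1, by
    rw [LinearMap.finrank_range_of_inj f.2, hfr]⟩
  have efib : ∀ W : S, {x : A // π x = W} ≃
      {g : (Fin r → F) →ₗ[F] W.1 // Function.Injective g} := by
    intro W
    refine
    { toFun := fun x => ⟨LinearMap.codRestrict W.1 x.1.1
        (fun v => by
          have hrange : LinearMap.range x.1.1 = W.1 := congrArg Subtype.val x.2
          rw [← hrange]; exact LinearMap.mem_range_self _ v),
        fun a b hab => x.1.2 (congrArg Subtype.val hab)⟩
      invFun := fun g => ⟨⟨W.1.subtype ∘ₗ g.1, W.1.injective_subtype.comp g.2⟩, ?_⟩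
      left_inv := fun x => Subtype.ext (Subtype.ext (by ext v; rfl))
      right_inv := fun g => Subtype.ext (by ext v; rfl) }
    · -- range of subtype ∘ g is W, using that g is surjective by dimension count
      have hsurj : Function.Surjective g.1 :=
        (LinearMap.injective_iff_surjective_of_finrank_eq_finrank
          (by rw [hfr, W.2])).mp g.2
      apply Subtype.ext
      show LinearMap.range (W.1.subtype ∘ₗ g.1) = W.1
      rw [LinearMap.range_comp, LinearMap.range_eq_top.mpr hsurj, Submodule.map_top,
        Submodule.range_subtype]
  have hcard : ∀ W : S, Nat.card {x : A // π x = W} =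
      ∏ i ∈ Finset.range r, (q ^ r - q ^ i) := by
    intro W
    rw [Nat.card_congr (efib W), card_inj (by rw [hfr, W.2]), hfr, W.2]
  have main : Nat.card A = Nat.card S * ∏ i ∈ Finset.range r, (q ^ r - q ^ i) :=
    calc Nat.card A = Nat.card (Σ W : S, {x : A // π x = W}) :=
          (Nat.card_congr (Equiv.sigmaFiberEquiv π)).symm
      _ = ∑ W : S, ∏ i ∈ Finset.range r, (q ^ r - q ^ i) := by
          rw [Nat.card_eq_fintype_card, Fintype.card_sigma]
          exact Finset.sum_congr rfl (fun W _ => by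
            rw [← Nat.card_eq_fintype_card]; exact hcard W)
      _ = Nat.card S * ∏ i ∈ Finset.range r, (q ^ r - q ^ i) := by
          rw [Finset.sum_const, Finset.card_univ, Nat.card_eq_fintype_card, smul_eq_mul]
  rw [← main, hA, card_inj (by rw [hfr]; exact hr), hfr]

end subspaces

/-- The Gaussian binomial coefficient `[m choose r]_q`. -/
def qBinom (q m r : ℕ) : ℕ :=
  (∏ i ∈ Finset.range r, (q ^ m - q ^ i)) / (∏ i ∈ Finset.range r, (q ^ r - q ^ i))

/-- For `0 ≤ r ≤ min(m,n)`, the number of rank `r` linear maps `F_q^m → F_q^n` is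
`[m choose r]_q · [n choose r]_q · ∏_{i<r} (q^r - q^i)`. -/
theorem stmt_6 (q m n r : ℕ) (hq : IsPrimePow q)
    (F : Type*) [Field F] [Fintype F] (hF : Fintype.card F = q)
    (hr : r ≤ min m n) :
    Nat.card {f : (Fin m → F) →ₗ[F] (Fin n → F) //
        Module.finrank F (LinearMap.range f) = r} =
      qBinom q m r * qBinom q n r * ∏ i ∈ Finset.range r, (q ^ r - q ^ i) := by
  have hrm : r ≤ m := hr.trans (min_le_left _ _)
  have hrn : r ≤ n := hr.trans (min_le_right _ _)
  have hfm : finrank F (Fin m → F) = m := by simp [Module.finrank_fintype_fun_eq_card]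
  have hfn : finrank F (Fin n → F) = n := by simp [Module.finrank_fintype_fun_eq_card]
  have hq2 : 1 < q := by rw [← hF]; exact Fintype.one_lt_card
  have hPr : 0 < ∏ i ∈ Finset.range r, (q ^ r - q ^ i) := by
    apply Finset.prod_pos
    intro i hi
    have : q ^ i < q ^ r := Nat.pow_lt_pow_right hq2 (Finset.mem_range.mp hi)
    omega
  set Sm := Nat.card {W : Submodule F (Fin m → F) // finrank F W = r} with hSm
  set Sn := Nat.card {W : Submodule F (Fin n → F) // finrank F W = r} with hSn
  have hsubm : Sm * ∏ i ∈ Finset.range r, (q ^ r - q ^ i) =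
      ∏ i ∈ Finset.range r, (q ^ m - q ^ i) := by
    have := card_subspaces_mul (F := F) (V' := Fin m → F) r (by rw [hfm]; exact hrm)
    rwa [hfm, hF] at this
  have hsubn : Sn * ∏ i ∈ Finset.range r, (q ^ r - q ^ i) =
      ∏ i ∈ Finset.range r, (q ^ n - q ^ i) := by
    have := card_subspaces_mul (F := F) (V' := Fin n → F) r (by rw [hfn]; exact hrn)
    rwa [hfn, hF] at this
  have hqm : qBinom q m r = Sm := by
    rw [qBinom, ← hsubm, Nat.mul_div_cancel _ hPr]
  have hqn : qBinom q n r = Sn := by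
    rw [qBinom, ← hsubn, Nat.mul_div_cancel _ hPr]
  have hmain := card_rank_r (F := F) (V := Fin m → F) (V' := Fin n → F) r
    (by rw [hfm]; exact hrm)
  rw [hfm, hF] at hmain
  rw [hmain, ← hSn, hqm, hqn, ← hsubm]
  ring
end

section
/- Let (f,g) be a nilpotent pair and v ∈ V balanced of length ℓ. Then f restricts to an isomorphism from the span of {v, Tv, ..., T^{ℓ−1}v} onto the span of {fv, T'fv, ..., (T')^{ℓ−1}fv}. -/
/-- Let `(f,g)` be a nilpotent pair and `v ∈ V` balanced of length `ℓ` (that is,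
`T^(ℓ-1) v ≠ 0`, `T^ℓ v = 0`, `(T')^(ℓ-1)(f v) ≠ 0`, `(T')^ℓ (f v) = 0`, where
`T = g∘f` and `T' = f∘g`).  Then `f` restricts to an isomorphism from
`span {v, Tv, …, T^(ℓ-1) v}` onto `span {f v, T' f v, …, (T')^(ℓ-1) (f v)}`. -/
theorem stmt_14 (k : Type*) [Field k] (V W : Type*) [AddCommGroup V] [Module k V]
    [AddCommGroup W] [Module k W] [FiniteDimensional k V] [FiniteDimensional k W]
    (f : V →ₗ[k] W) (g : W →ₗ[k] V) (hnil : IsNilpotent (g ∘ₗ f))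
    (v : V) (ℓ : ℕ)
    (h1 : ((g ∘ₗ f) ^ (ℓ - 1)) v ≠ 0) (h2 : ((g ∘ₗ f) ^ ℓ) v = 0)
    (h3 : ((f ∘ₗ g) ^ (ℓ - 1)) (f v) ≠ 0) (h4 : ((f ∘ₗ g) ^ ℓ) (f v) = 0) :
    ∃ h : ∀ x ∈ Submodule.span k (Set.range fun i : Fin ℓ => ((g ∘ₗ f) ^ (i : ℕ)) v),
        f x ∈ Submodule.span k (Set.range fun i : Fin ℓ => ((f ∘ₗ g) ^ (i : ℕ)) (f v)),
      Function.Bijective (f.restrict h) := by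
  have comm : ∀ (n : ℕ) (x : V), f (((g ∘ₗ f) ^ n) x) = ((f ∘ₗ g) ^ n) (f x) := by
    intro n
    induction n with
    | zero => intro x; simp
    | succ n ih =>
        intro x
        simp only [pow_succ', Module.End.mul_apply, LinearMap.comp_apply, ih]
  have hT'v : ∀ m, ℓ ≤ m → ((f ∘ₗ g) ^ m) (f v) = 0 := by
    intro m hm
    rw [show m = (m - ℓ) + ℓ by omega, pow_add, Module.End.mul_apply, h4, map_zero]
  have h : ∀ x ∈ Submodule.span k (Set.range fun i : Fin ℓ => ((g ∘ₗ f) ^ (i : ℕ)) v),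
      f x ∈ Submodule.span k (Set.range fun i : Fin ℓ => ((f ∘ₗ g) ^ (i : ℕ)) (f v)) := by
    intro x hx
    induction hx using Submodule.span_induction with
    | mem y hy =>
        obtain ⟨i, rfl⟩ := hy
        exact Submodule.subset_span ⟨i, (comm i v).symm⟩
    | zero => simp
    | add a b _ _ ha hb => rw [map_add]; exact add_mem ha hb
    | smul c a _ ha => rw [map_smul]; exact Submodule.smul_mem _ c ha
  refine ⟨h, ?_, ?_⟩
  · -- injective
    have main : ∀ x ∈ Submodule.span k (Set.range fun i : Fin ℓ => ((g ∘ₗ f) ^ (i : ℕ)) v),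
        f x = 0 → x = 0 := by
      intro x hx hfx
      rw [Submodule.mem_span_range_iff_exists_fun] at hx
      obtain ⟨c, hc⟩ := hx
      have key : ∀ j : Fin ℓ, (∀ i : Fin ℓ, i < j → c i = 0) → c j = 0 := by
        intro j hlt
        have e1 : (∑ i : Fin ℓ, c i • ((f ∘ₗ g) ^ (ℓ - 1 - (j : ℕ) + (i : ℕ))) (f v)) = 0 := by
          calc ∑ i : Fin ℓ, c i • ((f ∘ₗ g) ^ (ℓ - 1 - (j : ℕ) + (i : ℕ))) (f v)
              = f (((g ∘ₗ f) ^ (ℓ - 1 - (j : ℕ))) x) := by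
                rw [← hc, map_sum, map_sum]
                refine Finset.sum_congr rfl fun i _ => ?_
                rw [map_smul, map_smul, ← Module.End.mul_apply, ← pow_add, comm]
            _ = 0 := by rw [comm, hfx, map_zero]
        rw [Finset.sum_eq_single_of_mem j (Finset.mem_univ j)] at e1
        · have hexp : ℓ - 1 - (j : ℕ) + (j : ℕ) = ℓ - 1 := by
            have := j.isLt; omega
          rw [hexp] at e1
          rcases smul_eq_zero.mp e1 with h | h
          · exact h
          · exact absurd h h3
        · intro b _ hbj
          rcases lt_or_gt_of_ne hbj with hb | hb
          · rw [hlt b hb, zero_smul]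
          · rw [hT'v _ (by have := j.isLt; have : (j : ℕ) < (b : ℕ) := hb; omega),
              smul_zero]
      have hall : ∀ n : ℕ, ∀ j : Fin ℓ, (j : ℕ) < n → c j = 0 := by
        intro n
        induction n with
        | zero => intro j hj; omega
        | succ n ih =>
            intro j hj
            exact key j fun i hi => ih i (by have : (i : ℕ) < (j : ℕ) := hi; omega)
      rw [← hc]
      refine Finset.sum_eq_zero fun i _ => ?_
      rw [hall ℓ i i.isLt, zero_smul]
    rw [← LinearMap.ker_eq_bot, eq_bot_iff]
    rintro ⟨x, hx⟩ hker
    have hfx : f x = 0 := by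
      have := LinearMap.mem_ker.mp hker
      exact congrArg Subtype.val this
    exact Submodule.mem_bot _ |>.mpr (Subtype.ext (main x hx hfx))
  · -- surjective
    have surj : ∀ y ∈ Submodule.span k (Set.range fun i : Fin ℓ => ((f ∘ₗ g) ^ (i : ℕ)) (f v)),
        ∃ x, ∃ hx : x ∈ Submodule.span k (Set.range fun i : Fin ℓ => ((g ∘ₗ f) ^ (i : ℕ)) v),
          f x = y := by
      intro y hy
      induction hy using Submodule.span_induction with
      | mem w hw =>
          obtain ⟨i, rfl⟩ := hw
          exact ⟨((g ∘ₗ f) ^ (i : ℕ)) v, Submodule.subset_span ⟨i, rfl⟩, comm i v⟩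
      | zero => exact ⟨0, Submodule.zero_mem _, map_zero f⟩
      | add a b _ _ iha ihb =>
          obtain ⟨x1, hx1, e1⟩ := iha
          obtain ⟨x2, hx2, e2⟩ := ihb
          exact ⟨x1 + x2, Submodule.add_mem _ hx1 hx2, by rw [map_add, e1, e2]⟩
      | smul t a _ iha =>
          obtain ⟨x1, hx1, e1⟩ := iha
          exact ⟨t • x1, Submodule.smul_mem _ t hx1, by rw [map_smul, e1]⟩
    rintro ⟨y, hy⟩
    obtain ⟨x, hx, e⟩ := surj y hy
    exact ⟨⟨x, hx⟩, Subtype.ext (by simpa [LinearMap.restrict_apply] using e)⟩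
end

section
/- Let X, Y be finite sets with |X| = m, |Y| = n. A pair of maps f : X → Y, g : Y → X is eventually constant (meaning (g∘f)^k has image of size 1 for some k) if and only if the associated directed bipartite graph, with an edge x → f(x) for each x ∈ X and y → g(y) for each y ∈ Y, has exactly one directed cycle, which is a 2-cycle. -/
/-- The step map of the directed bipartite graph `G(f,g)` on `X ⊔ Y`, with an edge
`x → f x` for each `x ∈ X` and `y → g y` for each `y ∈ Y`. -/
def stepMap {X Y : Type*} (f : X → Y) (g : Y → X) : X ⊕ Y → X ⊕ Y
  | Sum.inl x => Sum.inr (f x)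
  | Sum.inr y => Sum.inl (g y)

lemma step_even {X Y : Type*} (f : X → Y) (g : Y → X) (m : ℕ) (x : X) :
    (stepMap f g)^[2*m] (Sum.inl x) = Sum.inl ((g ∘ f)^[m] x) := by
  induction m generalizing x with
  | zero => simp
  | succ n ih =>
      have : 2 * (n+1) = 2*n + 2 := by ring
      rw [this, Function.iterate_add_apply]
      have h2 : (stepMap f g)^[2] (Sum.inl x) = Sum.inl (g (f x)) := rfl
      rw [h2, ih, Function.iterate_succ_apply]
      rfl

lemma step_even_r {X Y : Type*} (f : X → Y) (g : Y → X) (m : ℕ) (y : Y) :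
    (stepMap f g)^[2*m] (Sum.inr y) = Sum.inr ((f ∘ g)^[m] y) := by
  induction m generalizing y with
  | zero => simp
  | succ n ih =>
      have : 2 * (n+1) = 2*n + 2 := by ring
      rw [this, Function.iterate_add_apply]
      have h2 : (stepMap f g)^[2] (Sum.inr y) = Sum.inr (f (g y)) := rfl
      rw [h2, ih, Function.iterate_succ_apply]
      rfl

lemma step_odd {X Y : Type*} (f : X → Y) (g : Y → X) (m : ℕ) (x : X) :
    (stepMap f g)^[2*m+1] (Sum.inl x) = Sum.inr (f ((g ∘ f)^[m] x)) := by
  rw [Function.iterate_succ_apply', step_even]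
  rfl

lemma step_odd_r {X Y : Type*} (f : X → Y) (g : Y → X) (m : ℕ) (y : Y) :
    (stepMap f g)^[2*m+1] (Sum.inr y) = Sum.inl (g ((f ∘ g)^[m] y)) := by
  rw [Function.iterate_succ_apply', step_even_r]
  rfl

/-- A pair `(f, g)` is eventually constant (some iterate of `g ∘ f` has singleton
image) iff the associated directed bipartite graph `G(f,g)` has exactly one directed
cycle, which is a 2-cycle: there are `x₀, y₀` with `f x₀ = y₀`, `g y₀ = x₀`, and the
vertices lying on directed cycles (the periodic points of the step map) are exactly
`x₀` and `y₀`. -/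
theorem stmt_18 (X Y : Type*) [Finite X] [Finite Y] [Nonempty X] [Nonempty Y]
    (f : X → Y) (g : Y → X) :
    (∃ (k : ℕ) (c : X), ∀ x, (g ∘ f)^[k] x = c) ↔
    ∃ (x₀ : X) (y₀ : Y), f x₀ = y₀ ∧ g y₀ = x₀ ∧
      ∀ z : X ⊕ Y, (∃ k ≥ 1, (stepMap f g)^[k] z = z) ↔
        (z = Sum.inl x₀ ∨ z = Sum.inr y₀) := by
  set h : X → X := g ∘ f with hh
  constructor
  · rintro ⟨k, c, hc⟩
    -- c is fixed by h
    have hfix : h c = c := by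
      have h1 : h^[k] (h c) = c := hc (h c)
      have h2 : h^[k] (h c) = h c := by
        rw [← Function.iterate_succ_apply, Function.iterate_succ_apply', hc]
      rw [h2] at h1; exact h1
    have hstab : ∀ n, k ≤ n → ∀ x, h^[n] x = c := by
      intro n hn x
      have : n = (n - k) + k := (Nat.sub_add_cancel hn).symm
      rw [this, Function.iterate_add_apply, hc, Function.iterate_fixed hfix]
    refine ⟨c, f c, rfl, hfix, ?_⟩
    intro z
    constructor
    · rintro ⟨m, hm1, hm⟩
      rcases Nat.even_or_odd m with ⟨t, ht⟩ | ⟨t, ht⟩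
      · subst ht
        match z with
        | Sum.inl x =>
            left
            rw [show t + t = 2 * t by ring, step_even] at hm
            have hper : h^[t] x = x := by injection hm
            have ht1 : 1 ≤ t := by omega
            have : h^[t * (k+1)] x = x := by
              rw [Function.iterate_mul]
              exact Function.iterate_fixed hper (k+1)
            have hk : k ≤ t * (k+1) := by nlinarith
            rw [hstab _ hk x] at this
            rw [← this]
        | Sum.inr y =>
            right
            rw [show t + t = 2 * t by ring, step_even_r] at hm
            have hper : (f ∘ g)^[t] y = y := by injection hm
            have ht1 : 1 ≤ t := by omega
            have hy : (f ∘ g)^[t * (k+1)] y = y := by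
              rw [Function.iterate_mul]
              exact Function.iterate_fixed hper (k+1)
            have hsc : Function.Semiconj f h (f ∘ g) := fun a => rfl
            have hpos : k + 1 ≤ t * (k+1) := Nat.le_mul_of_pos_left _ ht1
            have hs : t * (k+1) = (t * (k+1) - 1) + 1 := by omega
            have hk : k ≤ t * (k+1) - 1 := by omega
            rw [hs, Function.iterate_succ_apply] at hy
            rw [show (f ∘ g) y = f (g y) from rfl,
                ← (hsc.iterate_right _).eq (g y), hstab _ hk (g y)] at hy
            rw [← hy]
      · subst ht
        exfalso
        match z with
        | Sum.inl x =>
            rw [step_odd] at hm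
            exact absurd hm (by simp)
        | Sum.inr y =>
            rw [step_odd_r] at hm
            exact absurd hm (by simp)
    · rintro (rfl | rfl)
      · refine ⟨2, by norm_num, ?_⟩
        rw [show (2:ℕ) = 2*1 by ring, step_even]
        simp only [Function.iterate_one]
        exact congrArg Sum.inl hfix
      · refine ⟨2, by norm_num, ?_⟩
        rw [show (2:ℕ) = 2*1 by ring, step_even_r]
        simp only [Function.iterate_one]
        have : (f ∘ g) (f c) = f (h c) := rfl
        rw [this, hfix]
  · rintro ⟨x₀, y₀, hfx, hgy, hper⟩
    have hfix : h x₀ = x₀ := by simp [hh, Function.comp, hfx, hgy]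
    -- every point eventually reaches x₀
    have key : ∀ x : X, ∃ i, h^[i] x = x₀ := by
      intro x
      obtain ⟨i, j, hne, hij⟩ :=
        Finite.exists_ne_map_eq_of_infinite (fun n : ℕ => h^[n] x)
      wlog hlt : i < j generalizing i j
      · exact this j i hne.symm hij.symm (by omega)
      have hperiod : h^[j - i] (h^[i] x) = h^[i] x := by
        rw [← Function.iterate_add_apply, Nat.sub_add_cancel hlt.le]
        exact hij.symm
      have hstep : (stepMap f g)^[2 * (j - i)] (Sum.inl (h^[i] x)) = Sum.inl (h^[i] x) := by
        rw [step_even]; exact congrArg Sum.inl hperiod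
      have := (hper (Sum.inl (h^[i] x))).mp ⟨2 * (j - i), by omega, hstep⟩
      rcases this with heq | heq
      · exact ⟨i, by injection heq⟩
      · exact absurd heq (by simp)
    classical
    choose ix hix using key
    have := Fintype.ofFinite X
    refine ⟨Finset.univ.sup ix, x₀, fun x => ?_⟩
    have hle : ix x ≤ Finset.univ.sup ix := Finset.le_sup (Finset.mem_univ x)
    have : Finset.univ.sup ix = (Finset.univ.sup ix - ix x) + ix x :=
      (Nat.sub_add_cancel hle).symm
    rw [this, Function.iterate_add_apply, hix, Function.iterate_fixed hfix]
end
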